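/- The semigroup is strongly τ_{F_α}-continuous at 0 on X_α: for every x ∈ X_α and every p ∈ 𝒫 one has lim_{t→0+} p_{F_α}(T(t)x − x) = 0, i.e. lim_{t→0+} sup_{s>0} s^{−α} p(T(s)(T(t)x − x) − (T(t)x − x)) = 0. -/
import Mathlib


open scoped Topology

/-- The Favard norm `‖z‖_{F_α} = sup_{t>0} t^{−α}‖T(t)z − z‖` (as a supremum in `ℝ`). -/
noncomputable def favNorm {X : Type*} [NormedAddCommGroup X] [NormedSpace ℝ X]
    (T : ℝ → X →L[ℝ] X) (α : ℝ) (z : X) : ℝ :=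
  sSup ((fun t : ℝ => ‖T t z - z‖ / t ^ α) '' Set.Ioi 0)

/-- Membership in the Favard space `F_α`. -/
def memFav {X : Type*} [NormedAddCommGroup X] [NormedSpace ℝ X]
    (T : ℝ → X →L[ℝ] X) (α : ℝ) (z : X) : Prop :=
  BddAbove ((fun t : ℝ => ‖T t z - z‖ / t ^ α) '' Set.Ioi 0)

/-- The seminorm `p_{F_α}(z) = sup_{t>0} t^{−α} p(T(t)z − z)`. -/
noncomputable def pFav {X : Type*} [NormedAddCommGroup X] [NormedSpace ℝ X]
    (T : ℝ → X →L[ℝ] X) (α : ℝ) (p : Seminorm ℝ X) (z : X) : ℝ :=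
  sSup ((fun t : ℝ => p (T t z - z) / t ^ α) '' Set.Ioi 0)

/-- Membership in the space `X_α ⊆ F_α`. -/
def memX {X : Type*} [NormedAddCommGroup X] [NormedSpace ℝ X]
    (P : Set (Seminorm ℝ X)) (T : ℝ → X →L[ℝ] X) (α : ℝ) (z : X) : Prop :=
  memFav T α z ∧
    ∀ p ∈ P, Filter.Tendsto (fun t : ℝ => p (T t z - z) / t ^ α)
      (nhdsWithin 0 (Set.Ioi 0)) (nhds 0)

/-- The semigroup is strongly `τ_{F_α}`-continuous at `0` on `X_α`:
for every `x ∈ X_α` and `p ∈ 𝒫`, `p_{F_α}(T(t)x − x) → 0` as `t → 0+`. -/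
theorem statement12
    {X : Type*} [NormedAddCommGroup X] [NormedSpace ℝ X] [CompleteSpace X]
    (P : Set (Seminorm ℝ X))
    (hnorm : ∀ x : X, ‖x‖ = sSup {r : ℝ | ∃ p ∈ P, r = p x})
    (hcomplete : ∀ (u : ℕ → X) (C : ℝ), (∀ n, ‖u n‖ ≤ C) →
      (∀ p ∈ P, ∀ ε > (0:ℝ), ∃ N : ℕ, ∀ m ≥ N, ∀ n ≥ N, p (u m - u n) < ε) →
      ∃ x : X, ∀ p ∈ P, Filter.Tendsto (fun n => p (u n - x)) Filter.atTop (𝓝 0))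
    (T : ℝ → X →L[ℝ] X) (hT0 : T 0 = 1)
    (hTsg : ∀ s t : ℝ, 0 ≤ s → 0 ≤ t → T (t + s) = (T t).comp (T s))
    (M ω : ℝ) (hM : 1 ≤ M) (hω : ω < 0)
    (hgrowth : ∀ t : ℝ, 0 ≤ t → ‖T t‖ ≤ M * Real.exp (ω * t))
    (horbit : ∀ x : X, ∀ p ∈ P, ∀ t₀ : ℝ, 0 ≤ t₀ →
      Filter.Tendsto (fun t : ℝ => p (T t x - T t₀ x)) (𝓝[Set.Ici 0] t₀) (𝓝 0))
    (hbieq : ∀ (u : ℕ → X) (C : ℝ), (∀ n, ‖u n‖ ≤ C) →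
      (∀ p ∈ P, Filter.Tendsto (fun n => p (u n)) Filter.atTop (𝓝 0)) →
      ∀ t₀ > (0:ℝ), ∀ p ∈ P, ∀ ε > (0:ℝ), ∃ N : ℕ, ∀ n ≥ N, ∀ s ∈ Set.Icc (0:ℝ) t₀,
        p (T s (u n)) < ε)
    (α : ℝ) (hα : α ∈ Set.Ioo (0:ℝ) 1)
    (x : X) (hx : memX P T α x) :
    ∀ p ∈ P, Filter.Tendsto (fun t : ℝ => pFav T α p (T t x - x))
      (𝓝[>] (0:ℝ)) (𝓝 0) := by
  intro p hp
  obtain ⟨hxF, hxX⟩ := hx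
  have hα0 := hα.1
  -- every seminorm in P is dominated by the norm
  have hple : ∀ q : Seminorm ℝ X, q ∈ P → ∀ y : X, q y ≤ ‖y‖ := by
    intro q hq y
    by_cases hb : BddAbove {r : ℝ | ∃ p ∈ P, r = p y}
    · rw [hnorm y]
      exact le_csSup hb ⟨q, hq, rfl⟩
    · have h0 : ‖y‖ = 0 := by rw [hnorm y, Real.sSup_of_not_bddAbove hb]
      have hy : y = 0 := norm_eq_zero.mp h0
      simp [hy]
  set C : ℝ := favNorm T α x with hC
  have hCle : ∀ s : ℝ, 0 < s → ‖T s x - x‖ / s ^ α ≤ C := by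
    intro s hs
    exact le_csSup hxF ⟨s, hs, rfl⟩
  have hC0 : 0 ≤ C := le_trans (by positivity) (hCle 1 one_pos)
  -- commutativity of the semigroup
  have hcomm : ∀ s t : ℝ, 0 ≤ s → 0 ≤ t → T t (T s x) = T s (T t x) := by
    intro s t hs ht
    have h1 := hTsg s t hs ht
    have h2 := hTsg t s ht hs
    have hco : (T t).comp (T s) = (T s).comp (T t) := by
      rw [← h1, ← h2, add_comm]
    calc T t (T s x) = ((T t).comp (T s)) x := rfl
      _ = ((T s).comp (T t)) x := by rw [hco]
      _ = T s (T t x) := rfl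
  have hid : ∀ s t : ℝ, 0 ≤ s → 0 ≤ t →
      T s (T t x - x) - (T t x - x) = T t (T s x - x) - (T s x - x) := by
    intro s t hs ht
    have hc := hcomm s t hs ht
    simp only [map_sub]
    rw [hc]
    abel
  rw [Metric.tendsto_nhds]
  intro ε hε
  -- key claim: uniform smallness for small s, all r ∈ [0,1]
  have claim : ∃ δ : ℝ, 0 < δ ∧ δ ≤ 1 ∧ ∀ s : ℝ, 0 < s → s ≤ δ → ∀ r : ℝ, 0 ≤ r → r ≤ 1 →
      p (T r (T s x - x)) / s ^ α < ε / 3 := by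
    by_contra hcon
    push_neg at hcon
    have hsel : ∀ n : ℕ, ∃ s : ℝ, 0 < s ∧ s ≤ 1 / (n + 1) ∧ ∃ r : ℝ, 0 ≤ r ∧ r ≤ 1 ∧
        ε / 3 ≤ p (T r (T s x - x)) / s ^ α := by
      intro n
      have hpos : (0:ℝ) < 1 / (n + 1) := by positivity
      have hle1 : (1:ℝ) / (n + 1) ≤ 1 := by
        rw [div_le_one (by positivity)]
        linarith [Nat.cast_nonneg (α := ℝ) n]
      exact hcon (1 / (n + 1)) hpos hle1
    choose s hs1 hs2 r hr1 hr2 hr3 using hsel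
    set u : ℕ → X := fun n => (s n ^ α)⁻¹ • (T (s n) x - x) with hu
    have hspow : ∀ n, (0:ℝ) < s n ^ α := fun n => Real.rpow_pos_of_pos (hs1 n) α
    have hub : ∀ n, ‖u n‖ ≤ C := by
      intro n
      simp only [hu]
      rw [norm_smul, Real.norm_eq_abs, abs_inv, abs_of_pos (hspow n), inv_mul_eq_div]
      exact hCle (s n) (hs1 n)
    have hqz : ∀ q ∈ P, Filter.Tendsto (fun n => q (u n)) Filter.atTop (𝓝 0) := by
      intro q hq
      have hs0 : Filter.Tendsto s Filter.atTop (𝓝[>] (0:ℝ)) := by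
        rw [tendsto_nhdsWithin_iff]
        constructor
        · exact squeeze_zero (fun n => (hs1 n).le) hs2
            tendsto_one_div_add_atTop_nhds_zero_nat
        · exact Filter.Eventually.of_forall hs1
      have hcomp := (hxX q hq).comp hs0
      have heq : ∀ n, q (u n) = q (T (s n) x - x) / s n ^ α := by
        intro n
        simp only [hu]
        rw [map_smul_eq_mul, Real.norm_eq_abs, abs_inv, abs_of_pos (hspow n), inv_mul_eq_div]
      simp only [heq]
      exact hcomp
    obtain ⟨N, hN⟩ := hbieq u C hub hqz 1 one_pos p hp (ε / 3) (by linarith)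
    have h1 := hN N le_rfl (r N) ⟨hr1 N, hr2 N⟩
    have h2 : p (T (r N) (u N)) = p (T (r N) (T (s N) x - x)) / s N ^ α := by
      simp only [hu]
      rw [map_smul, map_smul_eq_mul, Real.norm_eq_abs, abs_inv, abs_of_pos (hspow N),
        inv_mul_eq_div]
    rw [h2] at h1
    exact absurd h1 (not_lt.mpr (hr3 N))
  obtain ⟨δ, hδ0, hδ1, hδ⟩ := claim
  have hδα : (0:ℝ) < δ ^ α := Real.rpow_pos_of_pos hδ0 α
  -- eventually the tail bound is small
  have htail : ∀ᶠ t in 𝓝[>] (0:ℝ), (M + 1) * C * t ^ α < ε / 3 * δ ^ α := by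
    have hrc : Filter.Tendsto (fun t : ℝ => t ^ α) (𝓝 (0:ℝ)) (𝓝 (0:ℝ)) := by
      have := (Real.continuousAt_rpow_const 0 α (Or.inr hα0.le)).tendsto
      rwa [Real.zero_rpow hα0.ne'] at this
    have h0 : Filter.Tendsto (fun t : ℝ => (M + 1) * C * t ^ α) (𝓝[>] (0:ℝ)) (𝓝 0) := by
      have h' : Filter.Tendsto (fun t : ℝ => (M + 1) * C * t ^ α) (𝓝 (0:ℝ)) (𝓝 0) := by
        simpa using hrc.const_mul ((M + 1) * C)
      exact h'.mono_left nhdsWithin_le_nhds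
    exact h0.eventually_lt_const (by positivity)
  have hIoc : ∀ᶠ t in 𝓝[>] (0:ℝ), t ∈ Set.Ioc (0:ℝ) 1 :=
    Ioc_mem_nhdsGT_of_mem (by constructor <;> norm_num)
  filter_upwards [htail, hIoc] with t h1 h2
  have ht0 : 0 < t := h2.1
  have ht1 : t ≤ 1 := h2.2
  set z := T t x - x with hz
  have hzn : ‖z‖ ≤ C * t ^ α := by
    have h := hCle t ht0
    rw [div_le_iff₀ (Real.rpow_pos_of_pos ht0 α)] at h
    linarith [h]
  have key : ∀ s : ℝ, 0 < s → p (T s z - z) / s ^ α ≤ 2 * ε / 3 := by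
    intro s hs
    have hsα : (0:ℝ) < s ^ α := Real.rpow_pos_of_pos hs α
    by_cases hsδ : s ≤ δ
    · have hb1 : p (T t (T s x - x)) / s ^ α < ε / 3 := hδ s hs hsδ t ht0.le ht1
      have hb2 : p (T s x - x) / s ^ α < ε / 3 := by
        have h0 := hδ s hs hsδ 0 le_rfl zero_le_one
        simpa [hT0] using h0
      have hsum : p (T s z - z) ≤ p (T t (T s x - x)) + p (T s x - x) := by
        rw [hz, hid s t hs.le ht0.le]
        exact map_sub_le_add p _ _
      calc p (T s z - z) / s ^ α
          ≤ (p (T t (T s x - x)) + p (T s x - x)) / s ^ α := by gcongr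
        _ = p (T t (T s x - x)) / s ^ α + p (T s x - x) / s ^ α := add_div _ _ _
        _ ≤ 2 * ε / 3 := by linarith
    · push_neg at hsδ
      have hδs : δ ^ α ≤ s ^ α :=
        Real.rpow_le_rpow hδ0.le hsδ.le hα0.le
      have hexp : Real.exp (ω * s) ≤ 1 := by
        rw [Real.exp_le_one_iff]
        exact mul_nonpos_iff.mpr (Or.inr ⟨hω.le, hs.le⟩)
      have hTs : ‖T s z‖ ≤ M * ‖z‖ := by
        calc ‖T s z‖ ≤ ‖T s‖ * ‖z‖ := (T s).le_opNorm z
          _ ≤ (M * Real.exp (ω * s)) * ‖z‖ := by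
              gcongr
              exact hgrowth s hs.le
          _ ≤ M * ‖z‖ := by
              have hM0 : (0:ℝ) ≤ M := by linarith
              nlinarith [mul_nonneg (mul_nonneg hM0 (norm_nonneg z)) (sub_nonneg.mpr hexp)]
      have hnum : p (T s z - z) ≤ (M + 1) * C * t ^ α := by
        have hp1 : p (T s z - z) ≤ p (T s z) + p z := map_sub_le_add p _ _
        have hp2 : p (T s z) ≤ ‖T s z‖ := hple p hp _
        have hp3 : p z ≤ ‖z‖ := hple p hp _
        nlinarith [norm_nonneg z]
      have hnum0 : (0:ℝ) ≤ (M + 1) * C * t ^ α := by positivity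
      refine le_of_lt ?_
      calc p (T s z - z) / s ^ α ≤ ((M + 1) * C * t ^ α) / δ ^ α := by
            gcongr <;> first | exact apply_nonneg p _ | skip
        _ < (ε / 3 * δ ^ α) / δ ^ α := by gcongr
        _ = ε / 3 := mul_div_cancel_right₀ _ hδα.ne'
        _ < 2 * ε / 3 := by linarith
  have hbdd : BddAbove ((fun s : ℝ => p (T s z - z) / s ^ α) '' Set.Ioi 0) := by
    refine ⟨2 * ε / 3, ?_⟩
    rintro y ⟨s, hs, rfl⟩
    exact key s hs
  have hle : pFav T α p z ≤ 2 * ε / 3 := by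
    apply Real.sSup_le
    · rintro y ⟨s, hs, rfl⟩
      exact key s hs
    · linarith
  have hge : 0 ≤ pFav T α p z := by
    refine le_trans ?_ (le_csSup hbdd ⟨1, Set.mem_Ioi.mpr one_pos, rfl⟩)
    positivity
  rw [Real.dist_eq, sub_zero, abs_of_nonneg hge]
  linarith
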